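/- The even-degree noncommutative differential forms Ω⁺(A), equipped with the Fedosov product, form an associative algebra, and the quotient of this algebra by the ideal IA := ⊕_{k≥1} Ω^{2k}(A) is isomorphic to A. -/

import Mathlib

/-- The even-degree noncommutative differential forms `Ω⁺(A) = ⨆ k, Ω^{2k}(A)`,
equipped with the Fedosov product `x ∘ y = x*y - (-1)^{|x|} dx dy`, form an
associative algebra (the even part is closed under the Fedosov product and the
product is associative), and the quotient of this algebra by the ideal
`IA = ⨆_{k ≥ 1} Ω^{2k}(A)` is isomorphic to `A = Ω⁰(A)`: the grade-zero
projection `proj` is a surjection onto `Ω⁰(A)` which is multiplicative for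
the Fedosov product, and whose kernel on the even part is exactly `IA`. -/
theorem evenForms_fedosov_algebra_quotient {Ω : Type*} [Ring Ω] [Algebra ℂ Ω]
    (𝒜 : ℕ → Submodule ℂ Ω) [GradedAlgebra 𝒜]
    (σ : Ω →ₐ[ℂ] Ω) (d : Ω →ₗ[ℂ] Ω)
    (hσ : ∀ (n : ℕ) (x : Ω), x ∈ 𝒜 n → σ x = ((-1 : ℂ) ^ n) • x)
    (hdeg : ∀ (n : ℕ) (x : Ω), x ∈ 𝒜 n → d x ∈ 𝒜 (n + 1))
    (hd2 : ∀ x, d (d x) = 0)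
    (hLeibniz : ∀ x y, d (x * y) = d x * y + σ x * d y) :
    -- `Even` is Ω⁺(A), `IA` is the ideal of even forms of degree ≥ 2
    let Even : Submodule ℂ Ω := ⨆ k : ℕ, 𝒜 (2 * k)
    let IA : Submodule ℂ Ω := ⨆ k : ℕ, 𝒜 (2 * k + 2)
    let proj : Ω →ₗ[ℂ] Ω := GradedAlgebra.proj 𝒜 0
    -- Ω⁺(A) is closed under the Fedosov product
    (∀ x ∈ Even, ∀ y ∈ Even, x * y - d (σ x) * d y ∈ Even)
    -- the Fedosov product is associative
    ∧ (∀ x ∈ Even, ∀ y ∈ Even, ∀ z ∈ Even,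
        x * (y * z - d (σ y) * d z) - d (σ x) * d (y * z - d (σ y) * d z)
          = (x * y - d (σ x) * d y) * z
              - d (σ (x * y - d (σ x) * d y)) * d z)
    -- the grade-zero projection is multiplicative for the Fedosov product
    ∧ (∀ x ∈ Even, ∀ y ∈ Even,
        proj (x * y - d (σ x) * d y) = proj x * proj y)
    -- and it is "reduction mod IA": on Ω⁺(A) its kernel is IA and its image is Ω⁰(A),
    -- so (Ω⁺(A), Fedosov) / IA ≅ A
    ∧ (∀ x ∈ Even, x - proj x ∈ IA)
    ∧ (∀ x ∈ Even, proj x = 0 → x ∈ IA)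
    ∧ (∀ a ∈ 𝒜 0, a ∈ Even ∧ proj a = a) := by
  intro Even IA proj
  -- the odd part
  set Odd : Submodule ℂ Ω := ⨆ k : ℕ, 𝒜 (2 * k + 1) with hOdd
  -- σ is the identity on even elements
  have hσeven : ∀ x ∈ Even, σ x = x := by
    intro x hx
    refine Submodule.iSup_induction (motive := fun x => σ x = x) _ hx ?_ (map_zero σ) ?_
    · intro k x hxk
      rw [hσ (2 * k) x hxk, pow_mul]
      norm_num
    · intro a b ha hb; rw [map_add, ha, hb]
  -- σ is -1 on odd elements
  have hσodd : ∀ x ∈ Odd, σ x = -x := by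
    intro x hx
    refine Submodule.iSup_induction (motive := fun x => σ x = -x) _ hx ?_ (by simp) ?_
    · intro k x hxk
      rw [hσ (2 * k + 1) x hxk, pow_succ, pow_mul]
      norm_num
    · intro a b ha hb; rw [map_add, ha, hb, neg_add]
  -- d maps Even to Odd
  have hdEven : ∀ x ∈ Even, d x ∈ Odd := by
    intro x hx
    refine Submodule.iSup_induction (motive := fun x => d x ∈ Odd) _ hx ?_ (by simp) ?_
    · intro k x hxk
      exact Submodule.mem_iSup_of_mem k (hdeg (2 * k) x hxk)
    · intro a b ha hb; rw [map_add]; exact add_mem ha hb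
  -- products
  have hmulEE : ∀ x ∈ Even, ∀ y ∈ Even, x * y ∈ Even := by
    intro x hx
    refine Submodule.iSup_induction
      (motive := fun x => ∀ y ∈ Even, x * y ∈ Even) _ hx ?_ (by simp) ?_
    · intro k x hxk y hy
      refine Submodule.iSup_induction (motive := fun y => x * y ∈ Even) _ hy ?_ (by simp) ?_
      · intro m y hym
        exact Submodule.mem_iSup_of_mem (k + m)
          (by simpa [mul_add] using SetLike.GradedMul.mul_mem hxk hym)
      · intro a b ha hb; rw [mul_add]; exact add_mem ha hb
    · intro a b ha hb y hy; rw [add_mul]; exact add_mem (ha y hy) (hb y hy)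
  have hmulOO : ∀ x ∈ Odd, ∀ y ∈ Odd, x * y ∈ IA := by
    intro x hx
    refine Submodule.iSup_induction
      (motive := fun x => ∀ y ∈ Odd, x * y ∈ IA) _ hx ?_ (by simp) ?_
    · intro k x hxk y hy
      refine Submodule.iSup_induction (motive := fun y => x * y ∈ IA) _ hy ?_ (by simp) ?_
      · intro m y hym
        refine Submodule.mem_iSup_of_mem (k + m) ?_
        have := SetLike.GradedMul.mul_mem hxk hym
        have he : 2 * k + 1 + (2 * m + 1) = 2 * (k + m) + 2 := by ring
        rwa [he] at this
      · intro a b ha hb; rw [mul_add]; exact add_mem ha hb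
    · intro a b ha hb y hy; rw [add_mul]; exact add_mem (ha y hy) (hb y hy)
  have hmulEI : ∀ x ∈ Even, ∀ y ∈ IA, x * y ∈ IA := by
    intro x hx
    refine Submodule.iSup_induction
      (motive := fun x => ∀ y ∈ IA, x * y ∈ IA) _ hx ?_ (by simp) ?_
    · intro k x hxk y hy
      refine Submodule.iSup_induction (motive := fun y => x * y ∈ IA) _ hy ?_ (by simp) ?_
      · intro m y hym
        refine Submodule.mem_iSup_of_mem (k + m) ?_
        have := SetLike.GradedMul.mul_mem hxk hym
        have he : 2 * k + (2 * m + 2) = 2 * (k + m) + 2 := by ring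
        rwa [he] at this
      · intro a b ha hb; rw [mul_add]; exact add_mem ha hb
    · intro a b ha hb y hy; rw [add_mul]; exact add_mem (ha y hy) (hb y hy)
  have hmulIE : ∀ x ∈ IA, ∀ y ∈ Even, x * y ∈ IA := by
    intro x hx
    refine Submodule.iSup_induction
      (motive := fun x => ∀ y ∈ Even, x * y ∈ IA) _ hx ?_ (by simp) ?_
    · intro k x hxk y hy
      refine Submodule.iSup_induction (motive := fun y => x * y ∈ IA) _ hy ?_ (by simp) ?_
      · intro m y hym
        refine Submodule.mem_iSup_of_mem (k + m) ?_
        have := SetLike.GradedMul.mul_mem hxk hym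
        have he : 2 * k + 2 + 2 * m = 2 * (k + m) + 2 := by ring
        rwa [he] at this
      · intro a b ha hb; rw [mul_add]; exact add_mem ha hb
    · intro a b ha hb y hy; rw [add_mul]; exact add_mem (ha y hy) (hb y hy)
  have hIAEven : IA ≤ Even := by
    refine iSup_le fun k => ?_
    have he : 2 * k + 2 = 2 * (k + 1) := by ring
    rw [he]; exact le_iSup (fun k => 𝒜 (2 * k)) (k + 1)
  have h0Even : ∀ a ∈ 𝒜 0, a ∈ Even := fun a ha =>
    Submodule.mem_iSup_of_mem 0 (by simpa using ha)
  -- proj facts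
  have hproj0 : ∀ a ∈ 𝒜 0, proj a = a := by
    intro a ha
    simp only [proj, GradedAlgebra.proj_apply]
    exact DirectSum.decompose_of_mem_same 𝒜 ha
  have hprojn : ∀ (n : ℕ), n ≠ 0 → ∀ x ∈ 𝒜 n, proj x = 0 := by
    intro n hn x hx
    simp only [proj, GradedAlgebra.proj_apply]
    exact DirectSum.decompose_of_mem_ne 𝒜 hx hn
  have hprojIA : ∀ x ∈ IA, proj x = 0 := by
    intro x hx
    refine Submodule.iSup_induction (motive := fun x => proj x = 0) _ hx ?_ (map_zero _) ?_
    · intro k x hxk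
      exact hprojn (2 * k + 2) (by omega) x hxk
    · intro a b ha hb; rw [map_add, ha, hb, add_zero]
  have hsplit : ∀ x ∈ Even, x - proj x ∈ IA ∧ proj x ∈ 𝒜 0 := by
    intro x hx
    refine Submodule.iSup_induction
      (motive := fun x => x - proj x ∈ IA ∧ proj x ∈ 𝒜 0) _ hx ?_ (by simp) ?_
    · intro k x hxk
      rcases Nat.eq_zero_or_pos k with rfl | hk
      · have h0 : x ∈ 𝒜 0 := by simpa using hxk
        rw [hproj0 x h0]
        exact ⟨by simp, h0⟩
      · have hne : 2 * k ≠ 0 := by omega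
        rw [hprojn (2 * k) hne x hxk]
        refine ⟨?_, zero_mem _⟩
        rw [sub_zero]
        refine Submodule.mem_iSup_of_mem (k - 1) ?_
        have he : 2 * (k - 1) + 2 = 2 * k := by omega
        rw [he]; exact hxk
    · intro a b ha hb
      constructor
      · have : a + b - proj (a + b) = (a - proj a) + (b - proj b) := by
          rw [map_add]; abel
        rw [this]; exact add_mem ha.1 hb.1
      · rw [map_add]; exact add_mem ha.2 hb.2
  -- σ on differentials of even elements
  have hσd : ∀ x ∈ Even, σ (d x) = -(d x) := fun x hx => hσodd _ (hdEven x hx)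
  -- d of a Fedosov product
  have hdF : ∀ x ∈ Even, ∀ y ∈ Even,
      d (x * y - d (σ x) * d y) = d x * y + x * d y := by
    intro x hx y hy
    rw [hσeven x hx, map_sub, hLeibniz, hLeibniz, hσeven x hx, hσd x hx, hd2, hd2]
    simp
  refine ⟨?_, ?_, ?_, fun x hx => (hsplit x hx).1, ?_, fun a ha => ⟨h0Even a ha, hproj0 a ha⟩⟩
  · -- closure
    intro x hx y hy
    rw [hσeven x hx]
    exact sub_mem (hmulEE x hx y hy)
      (hIAEven (hmulOO _ (hdEven x hx) _ (hdEven y hy)))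
  · -- associativity
    intro x hx y hy z hz
    have h1 : σ (x * y - d (σ x) * d y) = x * y - d (σ x) * d y := by
      rw [hσeven x hx, map_sub, map_mul, map_mul, hσeven x hx, hσeven y hy,
        hσd x hx, hσd y hy, neg_mul_neg]
    rw [h1, hdF y hy z hz, hσeven x hx, hσeven y hy]
    have h2 : d (x * y - d x * d y) = d x * y + x * d y := by
      have := hdF x hx y hy; rwa [hσeven x hx] at this
    rw [h2]
    noncomm_ring
  · -- proj multiplicative
    intro x hx y hy
    rw [hσeven x hx]
    obtain ⟨hx', hx0⟩ := hsplit x hx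
    obtain ⟨hy', hy0⟩ := hsplit y hy
    have hxy : x * y = proj x * proj y + (proj x * (y - proj y)
        + ((x - proj x) * proj y + (x - proj x) * (y - proj y))) := by noncomm_ring
    have hmem : proj x * (y - proj y)
        + ((x - proj x) * proj y + (x - proj x) * (y - proj y)) ∈ IA :=
      add_mem (hmulEI _ (h0Even _ hx0) _ hy')
        (add_mem (hmulIE _ hx' _ (h0Even _ hy0))
          (hmulIE _ hx' _ (hIAEven hy')))
    rw [map_sub, hprojIA _ (hmulOO _ (hdEven x hx) _ (hdEven y hy)), sub_zero,
      hxy, map_add, hprojIA _ hmem, add_zero,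
      hproj0 _ (SetLike.GradedMul.mul_mem (i := 0) (j := 0) hx0 hy0)]
  · -- kernel
    intro x hx h0
    have := (hsplit x hx).1
    rwa [h0, sub_zero] at this
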